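/- Let u be C² on Ω ⊂ R² with Du(x) ≠ 0 at x, and 1 < p < ∞. Then Δ_p u(x) = 0 if and only if u(x) = (1/p)·med_{∂B_ε(x)} u + ((p-1)/(2p))·(max_{cl B_ε(x)} u + min_{cl B_ε(x)} u) + o(ε²) as ε → 0. -/

import Mathlib

open MeasureTheory Real Filter Asymptotics Metric Set Topology

/-- Partial derivative ∂u/∂x_i. -/
noncomputable def pd {N : ℕ} (u : EuclideanSpace ℝ (Fin N) → ℝ) (i : Fin N)
    (x : EuclideanSpace ℝ (Fin N)) : ℝ :=
  fderiv ℝ u x (EuclideanSpace.single i 1)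

/-- Second partial derivative ∂²u/∂x_i∂x_j. -/
noncomputable def pd2 {N : ℕ} (u : EuclideanSpace ℝ (Fin N) → ℝ) (i j : Fin N)
    (x : EuclideanSpace ℝ (Fin N)) : ℝ :=
  pd (pd u j) i x

/-- The norm of the gradient |Du(x)|. -/
noncomputable def gradNorm {N : ℕ} (u : EuclideanSpace ℝ (Fin N) → ℝ)
    (x : EuclideanSpace ℝ (Fin N)) : ℝ :=
  Real.sqrt (∑ i, (pd u i x) ^ 2)

/-- The Laplacian Δu. -/
noncomputable def lap {N : ℕ} (u : EuclideanSpace ℝ (Fin N) → ℝ)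
    (x : EuclideanSpace ℝ (Fin N)) : ℝ :=
  ∑ i, pd2 u i i x

/-- The infinity-Laplacian Δ_∞ u = |Du|⁻² Σ ∂_i u ∂_j u ∂_ij u. -/
noncomputable def infLap {N : ℕ} (u : EuclideanSpace ℝ (Fin N) → ℝ)
    (x : EuclideanSpace ℝ (Fin N)) : ℝ :=
  (∑ i, ∑ j, pd u i x * pd u j x * pd2 u i j x) / (gradNorm u x) ^ 2

/-- The p-Laplacian Δ_p u = div(|Du|^{p-2} Du). -/
noncomputable def pLap {N : ℕ} (p : ℝ) (u : EuclideanSpace ℝ (Fin N) → ℝ)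
    (x : EuclideanSpace ℝ (Fin N)) : ℝ :=
  ∑ i, pd (fun y => gradNorm u y ^ (p - 2) * pd u i y) i x

/-- The 1-Laplacian Δ_1 u = |Du| div(Du/|Du|). -/
noncomputable def oneLap {N : ℕ} (u : EuclideanSpace ℝ (Fin N) → ℝ)
    (x : EuclideanSpace ℝ (Fin N)) : ℝ :=
  gradNorm u x * ∑ i, pd (fun y => pd u i y / gradNorm u y) i x

/-- The point x + ε(cos θ, sin θ) on the circle ∂B_ε(x). -/
noncomputable def circlePt (x : EuclideanSpace ℝ (Fin 2)) (ε θ : ℝ) :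
    EuclideanSpace ℝ (Fin 2) :=
  x + ε • (EuclideanSpace.single 0 (Real.cos θ) + EuclideanSpace.single 1 (Real.sin θ))

/-- The average of u over the circle ∂B_ε(x). -/
noncomputable def circleAvg (u : EuclideanSpace ℝ (Fin 2) → ℝ)
    (x : EuclideanSpace ℝ (Fin 2)) (ε : ℝ) : ℝ :=
  (2 * Real.pi)⁻¹ * ∫ θ in (0:ℝ)..(2 * Real.pi), u (circlePt x ε θ)

/-- m is a median of u over the circle ∂B_ε(x): the arc-length measures of the
sets where u ≥ m and u ≤ m coincide. -/
def IsCircleMedian (u : EuclideanSpace ℝ (Fin 2) → ℝ)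
    (x : EuclideanSpace ℝ (Fin 2)) (ε m : ℝ) : Prop :=
  volume {θ ∈ Set.Ico (0:ℝ) (2 * Real.pi) | m ≤ u (circlePt x ε θ)} =
  volume {θ ∈ Set.Ico (0:ℝ) (2 * Real.pi) | u (circlePt x ε θ) ≤ m}

set_option maxHeartbeats 1000000

noncomputable section MedAux

abbrev E2 := EuclideanSpace ℝ (Fin 2)

def vec2 (a b : ℝ) : E2 := EuclideanSpace.single 0 a + EuclideanSpace.single 1 b

lemma norm_vec2 (a b : ℝ) : ‖vec2 a b‖ = Real.sqrt (a ^ 2 + b ^ 2) := by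
  rw [EuclideanSpace.norm_eq]
  have h0 : vec2 a b 0 = a := by simp [vec2, EuclideanSpace.single_apply]
  have h1 : vec2 a b 1 = b := by simp [vec2, EuclideanSpace.single_apply]
  simp [Fin.sum_univ_two, h0, h1, sq_abs]

lemma clm_vec2' {F : Type*} [NormedAddCommGroup F] [NormedSpace ℝ F]
    (T : E2 →L[ℝ] F) (a b : ℝ) :
    T (vec2 a b) = a • T (EuclideanSpace.single 0 1) + b • T (EuclideanSpace.single 1 1) := by
  have h : vec2 a b = a • EuclideanSpace.single (0 : Fin 2) (1:ℝ)
      + b • EuclideanSpace.single (1 : Fin 2) (1:ℝ) := by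
    ext j; fin_cases j <;> simp [vec2, EuclideanSpace.single_apply]
  rw [h, map_add, T.map_smul, T.map_smul]

lemma clm_vec2 (T : E2 →L[ℝ] ℝ) (a b : ℝ) :
    T (vec2 a b) = a * T (EuclideanSpace.single 0 1) + b * T (EuclideanSpace.single 1 1) := by
  rw [clm_vec2' T a b]; simp

/-- the quadratic form of second derivatives -/
def Qf2 (u : E2 → ℝ) (x : E2) (a b : ℝ) : ℝ :=
  a^2 * pd2 u 0 0 x + a*b*(pd2 u 0 1 x + pd2 u 1 0 x) + b^2 * pd2 u 1 1 x

section Taylor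

variable {Ω : Set E2} (hΩ : IsOpen Ω) {u : E2 → ℝ} (hu : ContDiffOn ℝ 2 u Ω)
  {x : E2} (hx : x ∈ Ω)

include hΩ hu hx

lemma hasFDerivAt_fderiv :
    HasFDerivAt (fderiv ℝ u) (fderiv ℝ (fderiv ℝ u) x) x := by
  have hcd : ContDiffAt ℝ 2 u x := (hu x hx).contDiffAt (hΩ.mem_nhds hx)
  have hF : ContDiffAt ℝ 1 (fderiv ℝ u) x := hcd.fderiv_right (by norm_num)
  exact (hF.differentiableAt one_ne_zero).hasFDerivAt

lemma pd2_eq_Hm (i j : Fin 2) :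
    pd2 u i j x = fderiv ℝ (fderiv ℝ u) x (EuclideanSpace.single i 1)
      (EuclideanSpace.single j 1) := by
  have hFd := hasFDerivAt_fderiv hΩ hu hx
  have hcomp : HasFDerivAt (fun y => fderiv ℝ u y (EuclideanSpace.single j 1))
      ((ContinuousLinearMap.apply ℝ ℝ (EuclideanSpace.single j (1:ℝ))).comp
        (fderiv ℝ (fderiv ℝ u) x)) x :=
    (ContinuousLinearMap.apply ℝ ℝ (EuclideanSpace.single j (1:ℝ))).hasFDerivAt.comp x hFd
  have : pd2 u i j x = fderiv ℝ (fun y => fderiv ℝ u y (EuclideanSpace.single j 1)) x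
      (EuclideanSpace.single i 1) := rfl
  rw [this, hcomp.fderiv]
  rfl

lemma Hm_vec2 (a b : ℝ) :
    fderiv ℝ (fderiv ℝ u) x (vec2 a b) (vec2 a b) = Qf2 u x a b := by
  set Hm := fderiv ℝ (fderiv ℝ u) x
  rw [clm_vec2' Hm a b]
  simp only [ContinuousLinearMap.add_apply, ContinuousLinearMap.coe_smul',
    Pi.smul_apply, smul_eq_mul]
  rw [clm_vec2 (Hm (EuclideanSpace.single 0 1)) a b,
    clm_vec2 (Hm (EuclideanSpace.single 1 1)) a b]
  rw [Qf2, pd2_eq_Hm hΩ hu hx 0 0, pd2_eq_Hm hΩ hu hx 0 1,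
    pd2_eq_Hm hΩ hu hx 1 0, pd2_eq_Hm hΩ hu hx 1 1]
  ring

theorem taylor2 {δ : ℝ} (hδ : 0 < δ) :
    ∃ r > 0, closedBall x r ⊆ Ω ∧ ∀ a b : ℝ, a^2 + b^2 ≤ r^2 →
      |u (x + vec2 a b) - u x - (pd u 0 x * a + pd u 1 x * b)
        - (1/2) * Qf2 u x a b| ≤ δ * (a^2+b^2) := by
  classical
  set F := fderiv ℝ u with hFdef
  set Hm := fderiv ℝ F x with hHmdef
  have hFd : HasFDerivAt F Hm x := hasFDerivAt_fderiv hΩ hu hx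
  -- little-o bound for F near x
  have hlo := (hasFDerivAt_iff_isLittleO_nhds_zero.mp hFd)
  rw [isLittleO_iff] at hlo
  have hlo' := hlo (c := δ) hδ
  rw [Metric.eventually_nhds_iff] at hlo'
  obtain ⟨r1, hr1, hB⟩ := hlo'
  -- ball inside Ω
  obtain ⟨r2, hr2, hball⟩ := Metric.mem_nhds_iff.mp (hΩ.mem_nhds hx)
  set r := min (r1/2) (r2/2) with hrdef
  have hrpos : 0 < r := by positivity
  have hrsub : closedBall x r ⊆ Ω := by
    refine Subset.trans (fun y hy => ?_) hball
    rw [mem_closedBall] at hy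
    rw [mem_ball]
    calc dist y x ≤ r := hy
    _ < r2 := by simp [hrdef]; right; linarith [min_le_right (r1/2) (r2/2)]
  refine ⟨r, hrpos, hrsub, fun a b hab => ?_⟩
  set h : E2 := vec2 a b with hhdef
  have hnorm : ‖h‖ ≤ r := by
    rw [hhdef, norm_vec2]
    calc Real.sqrt (a^2+b^2) ≤ Real.sqrt (r^2) := Real.sqrt_le_sqrt hab
    _ = r := Real.sqrt_sq hrpos.le
  have hmem : ∀ t : ℝ, t ∈ Icc (0:ℝ) 1 → x + t • h ∈ closedBall x r := by
    intro t ht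
    rw [mem_closedBall, dist_eq_norm]
    have : x + t • h - x = t • h := by abel
    rw [this, norm_smul]
    calc ‖t‖ * ‖h‖ ≤ 1 * r := by
          apply mul_le_mul _ hnorm (norm_nonneg _) zero_le_one
          rw [Real.norm_eq_abs, abs_le]; exact ⟨by linarith [ht.1], ht.2⟩
    _ = r := one_mul r
  set φ : ℝ → ℝ := fun t => u (x + t • h) - t * (F x h) - t^2 * (Hm h h / 2) with hφdef
  set ψ : ℝ → ℝ := fun t => F (x + t • h) h - F x h - t * (Hm h h) with hψdef
  have hderiv : ∀ t ∈ Icc (0:ℝ) 1, HasDerivWithinAt φ (ψ t) (Icc 0 1) t := by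
    intro t ht
    have hline : HasDerivAt (fun s : ℝ => x + s • h) h t := by
      have h1 : HasDerivAt (fun s : ℝ => s • h) ((1:ℝ) • h) t :=
        (hasDerivAt_id t).smul_const h
      simpa using h1.const_add x
    have hmem' := hmem t ht
    have hudiff : DifferentiableAt ℝ u (x + t • h) :=
      (hu.differentiableOn two_ne_zero).differentiableAt
        (hΩ.mem_nhds (hrsub hmem'))
    have hu' : HasFDerivAt u (F (x + t • h)) (x + t • h) := hudiff.hasFDerivAt
    have hcomp : HasDerivAt (fun s => u (x + s • h)) (F (x + t • h) h) t :=
      hu'.comp_hasDerivAt t hline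
    have h2 : HasDerivAt (fun s : ℝ => s * (F x h)) (F x h) t := by
      simpa using (hasDerivAt_id t).mul_const (F x h)
    have h3 : HasDerivAt (fun s : ℝ => s^2 * (Hm h h / 2)) (t * Hm h h) t := by
      have := (hasDerivAt_pow 2 t).mul_const (Hm h h / 2)
      convert this using 1
      all_goals first | rfl | (push_cast; ring)
    exact ((hcomp.sub h2).sub h3).hasDerivWithinAt
  have hbound : ∀ t ∈ Icc (0:ℝ) 1, ‖ψ t‖ ≤ δ * ‖h‖^2 := by
    intro t ht
    have key : ψ t = (F (x + t • h) - F x - Hm (t • h)) h := by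
      simp only [hψdef, ContinuousLinearMap.sub_apply, Hm.map_smul,
        ContinuousLinearMap.coe_smul', Pi.smul_apply, smul_eq_mul]
    rw [key]
    have h1 : ‖(F (x + t • h) - F x - Hm (t • h)) h‖
        ≤ ‖F (x + t • h) - F x - Hm (t • h)‖ * ‖h‖ :=
      (F (x + t • h) - F x - Hm (t • h)).le_opNorm h
    have h2 : ‖F (x + t • h) - F x - Hm (t • h)‖ ≤ δ * ‖t • h‖ := by
      have hth : dist (t • h) 0 < r1 := by
        rw [dist_zero_right, norm_smul]
        have h3 : ‖t‖ * ‖h‖ ≤ r := by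
          calc ‖t‖ * ‖h‖ ≤ 1 * r := by
                apply mul_le_mul _ hnorm (norm_nonneg _) zero_le_one
                rw [Real.norm_eq_abs, abs_le]; exact ⟨by linarith [ht.1], ht.2⟩
          _ = r := one_mul r
        calc ‖t‖ * ‖h‖ ≤ r := h3
        _ ≤ r1/2 := min_le_left _ _
        _ < r1 := by linarith
      have := hB hth
      simpa using this
    calc ‖(F (x + t • h) - F x - Hm (t • h)) h‖
        ≤ (δ * ‖t • h‖) * ‖h‖ := le_trans h1 (by
          apply mul_le_mul_of_nonneg_right h2 (norm_nonneg _))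
    _ ≤ δ * ‖h‖^2 := by
        rw [norm_smul]
        have h4 : ‖t‖ ≤ 1 := by rw [Real.norm_eq_abs, abs_le]; exact ⟨by linarith [ht.1], ht.2⟩
        calc δ * (‖t‖ * ‖h‖) * ‖h‖ = δ * ‖h‖^2 * ‖t‖ := by ring
        _ ≤ δ * ‖h‖^2 * 1 := by
            apply mul_le_mul_of_nonneg_left h4 (by positivity)
        _ = δ * ‖h‖^2 := mul_one _
  have hMVT := Convex.norm_image_sub_le_of_norm_hasDerivWithin_le
    hderiv hbound (convex_Icc 0 1) (left_mem_Icc.mpr zero_le_one)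
    (right_mem_Icc.mpr zero_le_one)
  have hφ1 : φ 1 = u (x + h) - F x h - Hm h h / 2 := by simp [hφdef]
  have hφ0 : φ 0 = u x := by simp [hφdef]
  rw [hφ1, hφ0] at hMVT
  have hFxh : F x h = pd u 0 x * a + pd u 1 x * b := by
    rw [hhdef, clm_vec2 (F x) a b]; simp only [pd, ← hFdef]; ring
  have hHm : Hm h h = Qf2 u x a b := Hm_vec2 hΩ hu hx a b
  have hnormsq : ‖h‖^2 = a^2 + b^2 := by
    rw [hhdef, norm_vec2, Real.sq_sqrt (by positivity)]
  rw [hFxh, hHm, hnormsq] at hMVT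
  have : ‖(1:ℝ) - 0‖ = 1 := by norm_num
  rw [this, mul_one] at hMVT
  calc |u (x + h) - u x - (pd u 0 x * a + pd u 1 x * b) - 1/2 * Qf2 u x a b|
      = ‖u (x + h) - (pd u 0 x * a + pd u 1 x * b) - Qf2 u x a b / 2 - u x‖ := by
        rw [Real.norm_eq_abs]; ring_nf
  _ ≤ δ * (a^2 + b^2) := hMVT

end Taylor

lemma eq_vec2 (y : E2) : y = vec2 (y 0) (y 1) := by
  ext j
  fin_cases j <;> simp [vec2, EuclideanSpace.single_apply]

lemma coord_sq_norm (z : E2) : z 0 ^ 2 + z 1 ^ 2 = ‖z‖^2 := by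
  rw [EuclideanSpace.norm_eq, Real.sq_sqrt (by positivity)]
  simp [Fin.sum_univ_two, sq_abs]

lemma model_bound (g ε aa bb A K B' c : ℝ) (hg : 0 < g) (hε : 0 < ε) (hsum : aa^2+bb^2 ≤ ε^2)
    (h1 : ε*(|A|+|B'|) ≤ g/2) (h2 : ε*K^2 ≤ c*g) :
    g*aa + (A*aa^2 + K*aa*bb + B'*bb^2)/2 ≤ g*ε + A*ε^2/2 + (c/2)*ε^2 := by
  have haa : aa ≤ ε := by nlinarith [sq_nonneg bb]
  have haa' : -ε ≤ aa := by nlinarith [sq_nonneg bb]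
  have ht : 0 ≤ ε - aa := by linarith
  have hbb : bb^2 ≤ 2*ε*(ε-aa) := by nlinarith
  -- AM-GM for the cross term
  have H3 : 4*ε*g*(K*aa*bb) ≤ g^2*bb^2 + 4*K^2*ε^4 := by
    have key : 2*ε*(g^2*bb^2 + 4*K^2*ε^4 - 4*ε*g*(K*aa*bb))
        = (ε+aa)*(g*bb - 2*K*ε^2)^2 + (ε-aa)*(g*bb + 2*K*ε^2)^2 := by ring
    have hnn : 0 ≤ 2*ε*(g^2*bb^2 + 4*K^2*ε^4 - 4*ε*g*(K*aa*bb)) := by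
      rw [key]
      have := mul_nonneg (by linarith : (0:ℝ) ≤ ε+aa) (sq_nonneg (g*bb - 2*K*ε^2))
      have := mul_nonneg ht (sq_nonneg (g*bb + 2*K*ε^2))
      linarith
    nlinarith
  have f3 : A*(aa^2-ε^2) ≤ |A| *(2*ε*(ε-aa)) := by
    have h' : |A*(aa^2-ε^2)| = |A| * ((ε-aa)*(ε+aa)) := by
      rw [abs_mul]; congr 1
      rw [abs_of_nonpos (by nlinarith : aa^2-ε^2 ≤ 0)]; ring
    calc A*(aa^2-ε^2) ≤ |A*(aa^2-ε^2)| := le_abs_self _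
    _ = |A| * ((ε-aa)*(ε+aa)) := h'
    _ ≤ |A| *(2*ε*(ε-aa)) := by
        apply mul_le_mul_of_nonneg_left _ (abs_nonneg A)
        nlinarith
  have f4 : B'*bb^2 ≤ |B'| *(2*ε*(ε-aa)) := by
    calc B'*bb^2 ≤ |B'| *bb^2 := by
          apply mul_le_mul_of_nonneg_right (le_abs_self B') (sq_nonneg bb)
    _ ≤ |B'| *(2*ε*(ε-aa)) := mul_le_mul_of_nonneg_left hbb (abs_nonneg B')
  have H4 : 4*ε*g*(A*(aa^2-ε^2)) ≤ 4*ε*g*(|A| *(2*ε*(ε-aa))) :=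
    mul_le_mul_of_nonneg_left f3 (by positivity)
  have H5 : 4*ε*g*(B'*bb^2) ≤ 4*ε*g*(|B'| *(2*ε*(ε-aa))) :=
    mul_le_mul_of_nonneg_left f4 (by positivity)
  have H6 : g^2*bb^2 ≤ g^2*(2*ε*(ε-aa)) := mul_le_mul_of_nonneg_left hbb (by positivity)
  have H1 : (8*ε*g*(ε-aa)) * (ε*(|A|+|B'|)) ≤ (8*ε*g*(ε-aa)) * (g/2) :=
    mul_le_mul_of_nonneg_left h1 (by positivity)
  have H2 : (4*ε^2) * (ε*K^2) ≤ (4*ε^2) * (c*g) :=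
    mul_le_mul_of_nonneg_left h2 (by positivity)
  have H7 : 0 ≤ ε*g^2*(ε-aa) := by positivity
  have main : (8*ε*g) * (g*aa + (A*aa^2 + K*aa*bb + B'*bb^2)/2)
      ≤ (8*ε*g) * (g*ε + A*ε^2/2 + (c/2)*ε^2) := by nlinarith [H1, H2, H3, H4, H5, H6, H7]
  exact le_of_mul_le_mul_left main (by positivity)

theorem sSup_asymp {Ω : Set E2} (hΩ : IsOpen Ω) {u : E2 → ℝ} (hu : ContDiffOn ℝ 2 u Ω)
    {x : E2} (hx : x ∈ Ω) {g α : ℝ} (hgpos : 0 < g)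
    (hg0 : pd u 0 x = g * Real.cos α) (hg1 : pd u 1 x = g * Real.sin α) :
    (fun ε => sSup (u '' Metric.closedBall x ε)
        - (u x + ε * g + ε^2/2 * Qf2 u x (Real.cos α) (Real.sin α)))
      =o[𝓝[>] (0:ℝ)] fun ε => ε^2 := by
  rw [isLittleO_iff]
  intro c hc
  obtain ⟨r, hr, hsub, hT⟩ := taylor2 hΩ hu hx (δ := c/2) (by positivity)
  set A := Qf2 u x (Real.cos α) (Real.sin α) with hA
  set B' := Qf2 u x (-Real.sin α) (Real.cos α) with hB'
  set K := 2*Real.sin α*Real.cos α*(pd2 u 1 1 x - pd2 u 0 0 x)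
      + (Real.cos α^2 - Real.sin α^2)*(pd2 u 0 1 x + pd2 u 1 0 x) with hK
  have hsc : Real.sin α^2 + Real.cos α^2 = 1 := Real.sin_sq_add_cos_sq α
  set εmax := min r (min (g/(2*(|A|+|B'|)+1)) (c*g/(K^2+1))) with hεmax
  have hεmaxpos : 0 < εmax := by
    apply lt_min hr
    apply lt_min
    · positivity
    · positivity
  filter_upwards [Ioc_mem_nhdsGT_of_mem (Set.mem_Ico.mpr ⟨le_refl (0:ℝ), hεmaxpos⟩)]
    with ε hε
  have hε0 : 0 < ε := hε.1
  have hεr : ε ≤ r := le_trans hε.2 (min_le_left _ _)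
  have hcond1 : ε*(|A|+|B'|) ≤ g/2 := by
    have h := le_trans hε.2 (le_trans (min_le_right _ _) (min_le_left _ _))
    rw [le_div_iff₀ (by positivity)] at h
    nlinarith [abs_nonneg A, abs_nonneg B', hε0.le]
  have hcond2 : ε*K^2 ≤ c*g := by
    have h := le_trans hε.2 (le_trans (min_le_right _ _) (min_le_right _ _))
    rw [le_div_iff₀ (by positivity)] at h
    nlinarith [sq_nonneg K, hε0.le]
  have hballsub : closedBall x ε ⊆ Ω := (closedBall_subset_closedBall hεr).trans hsub
  -- upper bound for all points
  have hup : ∀ y ∈ closedBall x ε, u y ≤ u x + ε*g + ε^2/2*A + c*ε^2 := by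
    intro y hy
    set a := (y - x) 0 with hadef
    set b := (y - x) 1 with hbdef
    have hyx : x + vec2 a b = y := by
      rw [hadef, hbdef, ← eq_vec2 (y - x)]; abel
    have hab2 : a^2 + b^2 ≤ ε^2 := by
      rw [hadef, hbdef, coord_sq_norm (y-x)]
      have : ‖y - x‖ ≤ ε := by rw [← dist_eq_norm]; exact mem_closedBall.mp hy
      nlinarith [norm_nonneg (y-x)]
    have habr : a^2 + b^2 ≤ r^2 := le_trans hab2 (by nlinarith)
    have hTy := hT a b habr
    rw [hyx] at hTy
    set aa := a*Real.cos α + b*Real.sin α with haa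
    set bb := -a*Real.sin α + b*Real.cos α with hbb
    have ha' : a = aa*Real.cos α - bb*Real.sin α := by
      rw [haa, hbb]; linear_combination (-a)*hsc
    have hb' : b = aa*Real.sin α + bb*Real.cos α := by
      rw [haa, hbb]; linear_combination (-b)*hsc
    have hD : pd u 0 x * a + pd u 1 x * b = g * aa := by
      rw [hg0, hg1, haa]; ring
    have hQrot : Qf2 u x a b = A*aa^2 + K*aa*bb + B'*bb^2 := by
      conv_lhs => rw [ha', hb']
      rw [hA, hB', hK]
      simp only [Qf2]
      ring
    have hsum' : aa^2 + bb^2 ≤ ε^2 := by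
      have : aa^2 + bb^2 = a^2+b^2 := by
        rw [haa, hbb]; linear_combination (a^2+b^2)*hsc
      linarith
    have hmodel := model_bound g ε aa bb A K B' c hgpos hε0 hsum' hcond1 hcond2
    have habs := abs_le.mp hTy
    have hTbound : (c/2)*(a^2+b^2) ≤ (c/2)*ε^2 := by
      apply mul_le_mul_of_nonneg_left hab2 (by positivity)
    have h1 : u y ≤ u x + (pd u 0 x * a + pd u 1 x * b) + 1/2 * Qf2 u x a b
        + (c/2)*ε^2 := by
      have := habs.2
      linarith
    rw [hD, hQrot] at h1
    linarith [hmodel]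
  have hne : (u '' closedBall x ε).Nonempty :=
    ⟨u x, mem_image_of_mem u (mem_closedBall_self hε0.le)⟩
  have hSup : sSup (u '' closedBall x ε) ≤ u x + ε*g + ε^2/2*A + c*ε^2 := by
    apply csSup_le hne
    rintro v ⟨y, hy, rfl⟩
    exact hup y hy
  -- lower bound via the point x + ε ν
  have hmemy : x + vec2 (ε*Real.cos α) (ε*Real.sin α) ∈ closedBall x ε := by
    rw [mem_closedBall, dist_eq_norm]
    have : x + vec2 (ε*Real.cos α) (ε*Real.sin α) - x = vec2 (ε*Real.cos α) (ε*Real.sin α) := by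
      abel
    rw [this, norm_vec2]
    have : (ε*Real.cos α)^2 + (ε*Real.sin α)^2 = ε^2 := by linear_combination ε^2 * hsc
    rw [this, Real.sqrt_sq hε0.le]
  have hTy2 := hT (ε*Real.cos α) (ε*Real.sin α) (by nlinarith [hsc])
  have hDy2 : pd u 0 x * (ε*Real.cos α) + pd u 1 x * (ε*Real.sin α) = g*ε := by
    rw [hg0, hg1]; linear_combination g*ε*hsc
  have hQy2 : Qf2 u x (ε*Real.cos α) (ε*Real.sin α) = ε^2 * A := by
    rw [hA]; simp only [Qf2]; ring
  have hbdd : BddAbove (u '' closedBall x ε) :=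
    (isCompact_closedBall x ε).bddAbove_image (hu.continuousOn.mono hballsub)
  have hlow : u x + ε*g + ε^2/2*A - c*ε^2 ≤ sSup (u '' closedBall x ε) := by
    have hmem' := le_csSup hbdd (mem_image_of_mem u hmemy)
    have habs := (abs_le.mp hTy2).1
    rw [hDy2, hQy2] at habs
    nlinarith [habs, hmem', hc, sq_nonneg ε]
  rw [Real.norm_eq_abs, Real.norm_eq_abs, abs_of_nonneg (sq_nonneg ε), abs_le]
  constructor <;> [linarith; linarith]

lemma crossing {ψ ρ : ℝ} (hρ0 : 0 < ρ) (hρ : ρ < π/2) (h : |Real.cos ψ| ≤ Real.sin ρ) :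
    ∃ k : ℤ, |ψ - (π/2 + k*π)| ≤ ρ := by
  have hsiny : |Real.sin (ψ - π/2)| ≤ Real.sin ρ := by
    have : Real.cos ψ = -Real.sin (ψ - π/2) := by
      have := Real.cos_add_pi_div_two (ψ - π/2)
      simpa using this
    rwa [this, abs_neg] at h
  set y := ψ - π/2 with hy
  set k : ℤ := round (y / π) with hk
  refine ⟨k, ?_⟩
  have ht : |y - k*π| ≤ π/2 := by
    have h1 : |y/π - k| ≤ 1/2 := abs_sub_round (y/π)
    have hπ : (0:ℝ) < π := Real.pi_pos
    have heq : (y/π - k) * π = y - k*π := by field_simp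
    rw [← heq, abs_mul, abs_of_pos hπ]
    calc |y/π - k| * π ≤ (1/2) * π := by
          apply mul_le_mul_of_nonneg_right h1 hπ.le
    _ = π/2 := by ring
  set t := y - k*π with htdef
  have hsint : |Real.sin t| = |Real.sin y| := by
    have : Real.sin y = Real.sin t * Real.cos (k*π) := by
      rw [show y = t + k*π by rw [htdef]; ring, Real.sin_add, Real.sin_int_mul_pi]
      ring
    rw [this, abs_mul, Real.abs_cos_int_mul_pi, mul_one]
  have habs : |Real.sin t| ≤ Real.sin ρ := by rw [hsint]; exact hsiny
  have key : |t| ≤ ρ := by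
    by_contra hcon
    push_neg at hcon
    have h1 : Real.sin ρ < Real.sin |t| := by
      apply Real.strictMonoOn_sin ⟨by linarith, by linarith⟩
        ⟨by linarith [abs_nonneg t], ht⟩ hcon
    have h2 : Real.sin |t| = |Real.sin t| := by
      rcases le_or_gt 0 t with h' | h'
      · rw [abs_of_nonneg h', abs_of_nonneg]
        apply Real.sin_nonneg_of_nonneg_of_le_pi h'
        linarith [Real.pi_pos, (abs_le.mp ht).2, abs_of_nonneg h']
      · have hmt : -t ≤ π/2 := by
          have := (abs_le.mp ht).1; linarith [abs_of_neg h']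
        have h3 : Real.sin (-t) ≥ 0 := Real.sin_nonneg_of_nonneg_of_le_pi (by linarith)
          (by linarith [Real.pi_pos])
        have h4 : Real.sin t ≤ 0 := by rw [Real.sin_neg] at h3; linarith
        rw [abs_of_neg h', Real.sin_neg, abs_of_nonpos h4]
    rw [h2] at h1
    linarith
  have : ψ - (π/2 + k*π) = t := by rw [htdef, hy]; ring
  rw [this]
  exact key

lemma cos_arc_small (α c : ℝ) (hc : 0 < c) :
    volume {θ : ℝ | θ ∈ Set.Ico (0:ℝ) (2*π) ∧ c ≤ Real.cos (θ - α)} < ENNReal.ofReal π := by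
  have hπ : (0:ℝ) < π := Real.pi_pos
  set β := min (c/2) (π/4) with hβ
  have hβ0 : 0 < β := lt_min (by linarith) (by linarith)
  have hβ4 : β ≤ π/4 := min_le_right _ _
  have hsinβ : Real.sin β < c := by
    rcases le_or_gt (c/2) (π/4) with h' | h'
    · have : β = c/2 := min_eq_left h'
      rw [this]
      calc Real.sin (c/2) < c/2 := Real.sin_lt (by linarith)
      _ < c := by linarith
    · have hc2 : π/2 < c := by linarith
      calc Real.sin β ≤ 1 := Real.sin_le_one β
      _ < π/2 := by linarith [Real.pi_gt_three]
      _ < c := hc2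
  set P := {θ : ℝ | Real.cos (θ - α) < c} with hP
  have hmeasP : MeasurableSet P := by
    apply measurableSet_lt
    · exact (Real.continuous_cos.comp (continuous_id.sub continuous_const)).measurable
    · exact measurable_const
  have hper : ∀ gk : AddSubgroup.zmultiples (2*π), (fun θ : ℝ => (gk:ℝ) +ᵥ θ) ⁻¹' P = P := by
    rintro ⟨g', hg'⟩
    obtain ⟨k, hk⟩ := AddSubgroup.mem_zmultiples_iff.mp hg'
    ext θ
    simp only [Set.mem_preimage, hP, Set.mem_setOf_eq, vadd_eq_add]
    have : (g' + θ) - α = (θ - α) + k * (2*π) := by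
      rw [← hk]; push_cast [zsmul_eq_mul]; ring
    rw [this, Real.cos_add_int_mul_two_pi]
  have hfd1 := isAddFundamentalDomain_Ioc (by linarith : (0:ℝ) < 2*π) 0
  have hfd2 := isAddFundamentalDomain_Ioc (by linarith : (0:ℝ) < 2*π) (α + π/2 - β)
  have key : volume (P ∩ Set.Ioc 0 (0 + 2*π)) = volume (P ∩ Set.Ioc (α + π/2 - β) (α + π/2 - β + 2*π)) :=
    hfd1.measure_set_eq hfd2 hmeasP hper
  have hsub2 : Set.Ioc (α + π/2 - β) (α + 3*π/2 + β) ⊆ P ∩ Set.Ioc (α + π/2 - β) (α + π/2 - β + 2*π) := by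
    intro θ hθ
    obtain ⟨h1, h2⟩ := hθ
    have hβ2 : 0 ≤ π/2 - β := by linarith
    have hsb : Real.cos (π/2 - β) = Real.sin β := Real.cos_pi_div_two_sub β
    have hcase : Real.cos (θ - α) ≤ Real.sin β := by
      rcases le_or_gt (θ - α) π with h' | h'
      · have hle : Real.cos (θ - α) ≤ Real.cos (π/2 - β) :=
          Real.cos_le_cos_of_nonneg_of_le_pi hβ2 h' (by linarith)
        linarith
      · have he : Real.cos (θ - α) = Real.cos (2*π - (θ - α)) :=
          (Real.cos_two_pi_sub (θ - α)).symm
        have hle : Real.cos (2*π - (θ - α)) ≤ Real.cos (π/2 - β) :=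
          Real.cos_le_cos_of_nonneg_of_le_pi hβ2 (by linarith) (by linarith)
        linarith
    refine ⟨?_, ?_⟩
    · show Real.cos (θ - α) < c
      linarith
    · exact Set.mem_Ioc.mpr ⟨h1, by linarith⟩
  have hlow : ENNReal.ofReal (π + 2*β) ≤ volume (P ∩ Set.Ioc 0 (0 + 2*π)) := by
    rw [key]
    calc ENNReal.ofReal (π + 2*β) = volume (Set.Ioc (α + π/2 - β) (α + 3*π/2 + β)) := by
          rw [Real.volume_Ioc]; congr 1; ring
    _ ≤ _ := measure_mono hsub2
  -- move to Ico 0 2π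
  have hlow2 : ENNReal.ofReal (π + 2*β) ≤ volume (P ∩ Set.Ico 0 (2*π)) := by
    have hsub3 : P ∩ Set.Ioc 0 (0 + 2*π) ⊆ (P ∩ Set.Ico 0 (2*π)) ∪ {2*π} := by
      intro θ ⟨hθP, hθI⟩
      rcases lt_or_eq_of_le hθI.2 with h' | h'
      · exact Or.inl ⟨hθP, ⟨hθI.1.le, by linarith⟩⟩
      · exact Or.inr (by simp only [Set.mem_singleton_iff]; linarith)
    calc ENNReal.ofReal (π + 2*β) ≤ volume (P ∩ Set.Ioc 0 (0 + 2*π)) := hlow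
    _ ≤ volume ((P ∩ Set.Ico 0 (2*π)) ∪ {2*π}) := measure_mono hsub3
    _ ≤ volume (P ∩ Set.Ico 0 (2*π)) + volume ({2*π} : Set ℝ) := measure_union_le _ _
    _ = volume (P ∩ Set.Ico 0 (2*π)) := by rw [Real.volume_singleton, add_zero]
  set T := {θ : ℝ | θ ∈ Set.Ico (0:ℝ) (2*π) ∧ c ≤ Real.cos (θ - α)} with hT
  by_contra hcon
  push_neg at hcon
  have hdisj : Disjoint T (P ∩ Set.Ico 0 (2*π)) := by
    rw [Set.disjoint_left]
    rintro θ ⟨_, hθ2⟩ ⟨hθP, _⟩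
    exact absurd hθ2 (not_le.mpr hθP)
  have hunion : T ∪ (P ∩ Set.Ico 0 (2*π)) ⊆ Set.Ico 0 (2*π) := by
    rintro θ (⟨h1, _⟩ | ⟨_, h2⟩) <;> assumption
  have hvol : volume T + volume (P ∩ Set.Ico 0 (2*π)) = volume (T ∪ (P ∩ Set.Ico 0 (2*π))) := by
    rw [measure_union hdisj (hmeasP.inter measurableSet_Ico)]
  have hle : volume T + volume (P ∩ Set.Ico 0 (2*π)) ≤ ENNReal.ofReal (2*π) := by
    rw [hvol]
    have : ENNReal.ofReal (2*π) = volume (Set.Ico (0:ℝ) (2*π)) := by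
      rw [Real.volume_Ico, sub_zero]
    rw [this]
    apply measure_mono hunion
  have : ENNReal.ofReal π + ENNReal.ofReal (π + 2*β) ≤ ENNReal.ofReal (2*π) := by
    calc ENNReal.ofReal π + ENNReal.ofReal (π + 2*β)
        ≤ volume T + volume (P ∩ Set.Ico 0 (2*π)) := add_le_add hcon hlow2
    _ ≤ ENNReal.ofReal (2*π) := hle
  rw [← ENNReal.ofReal_add (by linarith) (by linarith)] at this
  have := (ENNReal.ofReal_le_ofReal_iff (by linarith)).mp this
  linarith

lemma circlePt_eq_vec2 (x : E2) (ε θ : ℝ) :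
    circlePt x ε θ = x + vec2 (ε * Real.cos θ) (ε * Real.sin θ) := by
  unfold circlePt vec2
  congr 1
  ext j
  fin_cases j <;> simp [EuclideanSpace.single_apply]

theorem med_upper {Ω : Set E2} (hΩ : IsOpen Ω) {u : E2 → ℝ} (hu : ContDiffOn ℝ 2 u Ω)
    {x : E2} (hx : x ∈ Ω) {g α : ℝ} (hgpos : 0 < g)
    (hg0 : pd u 0 x = g * Real.cos α) (hg1 : pd u 1 x = g * Real.sin α)
    {s : ℝ} (hs : Qf2 u x (-Real.sin α) (Real.cos α) / 2 < s) :
    ∀ᶠ ε in 𝓝[>] (0:ℝ),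
      volume {θ : ℝ | θ ∈ Set.Ico (0:ℝ) (2*π) ∧ u x + ε^2*s ≤ u (circlePt x ε θ)}
        < ENNReal.ofReal π := by
  have hπ : (0:ℝ) < π := Real.pi_pos
  obtain ⟨H00, hH00⟩ : ∃ y, y = pd2 u 0 0 x := ⟨_, rfl⟩
  obtain ⟨HH, hHH⟩ : ∃ y, y = pd2 u 0 1 x + pd2 u 1 0 x := ⟨_, rfl⟩
  obtain ⟨H11, hH11⟩ : ∃ y, y = pd2 u 1 1 x := ⟨_, rfl⟩
  obtain ⟨q, hq⟩ : ∃ q' : ℝ → ℝ, q' = fun θ => Qf2 u x (Real.cos θ) (Real.sin θ) / 2 := ⟨_, rfl⟩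
  have hqval : q (α + π/2) = Qf2 u x (-Real.sin α) (Real.cos α) / 2 := by
    rw [hq]
    simp only
    rw [Real.cos_add_pi_div_two, Real.sin_add_pi_div_two]
  obtain ⟨δ, hδdef⟩ : ∃ y, y = s - Qf2 u x (-Real.sin α) (Real.cos α) / 2 := ⟨_, rfl⟩
  have hδ : 0 < δ := by rw [hδdef]; linarith
  obtain ⟨r, hr, hsub, hT⟩ := taylor2 hΩ hu hx (δ := δ/4) (by positivity)
  -- continuity of q at α + π/2
  have hqc : Continuous q := by
    rw [hq]
    simp only [Qf2]
    fun_prop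
  obtain ⟨ρ', hρ'pos, hρ'⟩ := Metric.continuousAt_iff.mp hqc.continuousAt (δ/4) (by positivity)
  obtain ⟨ρ, hρdef⟩ : ∃ y, y = min (ρ'/2) (π/4) := ⟨_, rfl⟩
  have hρ0 : 0 < ρ := by rw [hρdef]; exact lt_min (by linarith) (by linarith)
  have hρ4 : ρ ≤ π/4 := by rw [hρdef]; exact min_le_right _ _
  have hρπ2 : ρ < π/2 := by linarith
  have hsinρ : 0 < Real.sin ρ := Real.sin_pos_of_pos_of_lt_pi hρ0 (by linarith)
  -- global bound on q
  obtain ⟨Cq, hCq⟩ : ∃ y, y = (|H00| + |HH| + |H11|)/2 + 1 := ⟨_, rfl⟩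
  have hCqpos : 0 < Cq := by rw [hCq]; positivity
  have hqbd : ∀ θ : ℝ, |q θ| ≤ Cq := by
    intro θ
    have hc2 : Real.cos θ^2 ≤ 1 := Real.cos_sq_le_one θ
    have hs2 : Real.sin θ^2 ≤ 1 := Real.sin_sq_le_one θ
    have hcs : |Real.cos θ * Real.sin θ| ≤ 1 := by
      rw [abs_mul]
      exact mul_le_one₀ (Real.abs_cos_le_one θ) (abs_nonneg _) (Real.abs_sin_le_one θ)
    have f1 : |Real.cos θ^2 * H00| ≤ |H00| := by
      rw [abs_mul, abs_of_nonneg (sq_nonneg (Real.cos θ))]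
      exact mul_le_of_le_one_left (abs_nonneg _) hc2
    have f2 : |Real.cos θ * Real.sin θ * HH| ≤ |HH| := by
      rw [abs_mul]
      exact mul_le_of_le_one_left (abs_nonneg _) hcs
    have f3 : |Real.sin θ^2 * H11| ≤ |H11| := by
      rw [abs_mul, abs_of_nonneg (sq_nonneg (Real.sin θ))]
      exact mul_le_of_le_one_left (abs_nonneg _) hs2
    have habc : |Real.cos θ^2 * H00 + Real.cos θ * Real.sin θ * HH + Real.sin θ^2 * H11|
        ≤ |H00| + |HH| + |H11| := by
      have h3 := abs_add_three (Real.cos θ^2 * H00) (Real.cos θ * Real.sin θ * HH)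
        (Real.sin θ^2 * H11)
      linarith
    have hqθ : q θ = (Real.cos θ^2 * H00 + Real.cos θ * Real.sin θ * HH + Real.sin θ^2 * H11)/2 := by
      rw [hq, hH00, hHH, hH11]; simp only [Qf2]; try ring
    rw [hqθ, abs_div, abs_two, hCq]
    linarith [habc]
  -- π-periodicity of q
  have hqper : ∀ y : ℝ, ∀ k : ℤ, q (y + k*π) = q y := by
    intro y k
    have hsk : Real.sin ((k:ℝ)*π) = 0 := Real.sin_int_mul_pi k
    have hcos : Real.cos (y + k*π) = Real.cos y * Real.cos (k*π) := by
      rw [Real.cos_add, hsk]; ring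
    have hsin : Real.sin (y + k*π) = Real.sin y * Real.cos (k*π) := by
      rw [Real.sin_add, hsk]; ring
    have hck : Real.cos ((k:ℝ)*π)^2 = 1 := by
      rw [← sq_abs, Real.abs_cos_int_mul_pi]; norm_num
    rw [hq]
    simp only [hcos, hsin, Qf2]
    linear_combination ((Real.cos y^2 * pd2 u 0 0 x + Real.cos y * Real.sin y * (pd2 u 0 1 x + pd2 u 1 0 x) + Real.sin y^2 * pd2 u 1 1 x)/2) * hck
  have hsc : ∀ θ : ℝ, Real.sin θ^2 + Real.cos θ^2 = 1 := fun θ => Real.sin_sq_add_cos_sq θ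
  -- choose εmax
  obtain ⟨εmax, hεmax⟩ : ∃ y, y = min r (min (2*g*Real.sin ρ/(δ+1)) (g*Real.sin ρ/(Cq + δ/4 + |s| + 1))) := ⟨_, rfl⟩
  have hεmaxpos : 0 < εmax := by
    rw [hεmax]
    apply lt_min hr
    apply lt_min <;> positivity
  filter_upwards [Ioc_mem_nhdsGT_of_mem (Set.mem_Ico.mpr ⟨le_refl (0:ℝ), hεmaxpos⟩)] with ε hε
  have hε0 : 0 < ε := hε.1
  have hε2 := hε.2
  rw [hεmax] at hε2
  have hεr : ε ≤ r := le_trans hε2 (min_le_left _ _)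
  have hii : ε * (δ+1) ≤ 2*g*Real.sin ρ := by
    have h := le_trans hε2 (le_trans (min_le_right _ _) (min_le_left _ _))
    rw [le_div_iff₀ (by positivity)] at h
    linarith
  have hiii : ε * (Cq + δ/4 + |s| + 1) ≤ g*Real.sin ρ := by
    have h := le_trans hε2 (le_trans (min_le_right _ _) (min_le_right _ _))
    rw [le_div_iff₀ (by positivity)] at h
    linarith
  have hcsmall : 0 < ε*δ/(2*g) := by positivity
  refine lt_of_le_of_lt (measure_mono ?_) (cos_arc_small α (ε*δ/(2*g)) hcsmall)
  rintro θ ⟨hθI, hθu⟩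
  refine ⟨hθI, ?_⟩
  -- Taylor expansion at the circle point
  have hee : (ε*Real.cos θ)^2 + (ε*Real.sin θ)^2 = ε^2 := by
    linear_combination ε^2 * hsc θ
  have hTθ := hT (ε*Real.cos θ) (ε*Real.sin θ) (by nlinarith [hsc θ])
  rw [← circlePt_eq_vec2] at hTθ
  have hD : pd u 0 x * (ε*Real.cos θ) + pd u 1 x * (ε*Real.sin θ) = ε*(g*Real.cos (θ-α)) := by
    rw [hg0, hg1, Real.cos_sub]; ring
  have hQ : (1/2) * Qf2 u x (ε*Real.cos θ) (ε*Real.sin θ) = ε^2 * q θ := by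
    rw [hq]; simp only [Qf2]; ring
  have habs := (abs_le.mp hTθ).2
  rw [hD, hQ, hee] at habs
  -- u (circlePt) ≤ u x + ε g cos(θ-α) + ε² q θ + (δ/4) ε²
  -- combined with hθu : u x + ε² s ≤ u (circlePt)
  have hkey : ε^2 * s ≤ ε*(g*Real.cos (θ-α)) + ε^2 * q θ + δ/4 * ε^2 := by linarith
  have hdiv : ε * s ≤ g*Real.cos (θ-α) + ε * q θ + δ/4 * ε := by
    have h2 : ε * (ε * s) ≤ ε * (g*Real.cos (θ-α) + ε * q θ + δ/4 * ε) := by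
      have e1 : ε * (ε * s) = ε^2 * s := by ring
      have e2 : ε * (g*Real.cos (θ-α) + ε * q θ + δ/4 * ε)
          = ε*(g*Real.cos (θ-α)) + ε^2 * q θ + δ/4 * ε^2 := by ring
      rw [e1, e2]; exact hkey
    exact le_of_mul_le_mul_left h2 hε0
  show ε*δ/(2*g) ≤ Real.cos (θ - α)
  rcases le_or_gt |Real.cos (θ-α)| (Real.sin ρ) with hcase | hcase
  · -- near the crossing
    obtain ⟨k, hk⟩ := crossing hρ0 hρπ2 hcase
    set t := (θ - α) - (π/2 + k*π) with htdef
    have hθeq : θ = (α + π/2 + t) + (k:ℝ)*π := by rw [htdef]; ring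
    have hqθ : q θ = q (α + π/2 + t) := by
      conv_lhs => rw [hθeq]
      exact hqper (α + π/2 + t) k
    have hclose : |q (α + π/2 + t) - q (α + π/2)| < δ/4 := by
      have := hρ' (x := α + π/2 + t) (by
        rw [Real.dist_eq]
        have : α + π/2 + t - (α + π/2) = t := by ring
        rw [this]
        calc |t| ≤ ρ := hk
        _ ≤ ρ'/2 := by rw [hρdef] at hk ⊢; exact min_le_left _ _
        _ < ρ' := by linarith)
      rwa [Real.dist_eq] at this
    have hqup : q θ ≤ q (α + π/2) + δ/4 := by
      rw [hqθ]
      have := (abs_le.mp hclose.le).2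
      linarith
    have hmul : ε * q θ ≤ ε * q (α + π/2) + ε * (δ/4) := by
      have := mul_le_mul_of_nonneg_left hqup hε0.le
      rw [mul_add] at this
      exact this
    have hδs : δ = s - q (α + π/2) := by rw [hδdef, hqval]
    have hεs : ε * s = ε * q (α + π/2) + ε * δ := by rw [hδs]; ring
    have hstep : ε*δ/2 ≤ g * Real.cos (θ-α) := by linarith
    rw [div_le_iff₀ (by positivity)]
    have hgoal : Real.cos (θ-α) * (2*g) = 2*(g*Real.cos (θ-α)) := by ring
    rw [hgoal]
    linarith [hstep]
  · rcases lt_abs.mp hcase with h1 | h1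
    · -- cos is large positive
      have : ε*δ/(2*g) ≤ Real.sin ρ := by
        rw [div_le_iff₀ (by positivity)]
        rw [mul_add, mul_one] at hii
        linarith
      linarith
    · -- cos is large negative: contradiction
      exfalso
      have hcosneg : Real.cos (θ-α) < -Real.sin ρ := by linarith
      have hgc : g * Real.cos (θ-α) < g * (-Real.sin ρ) :=
        mul_lt_mul_of_pos_left hcosneg hgpos
      have hqlow : -Cq ≤ q θ := by
        have := (abs_le.mp (hqbd θ)).1; linarith
      have hslow : -|s| ≤ s := neg_abs_le s
      -- from hdiv : g cos ≥ ε s - ε q θ - δ/4 ε ≥ -ε(|s| + Cq + δ/4)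
      have hmul2 : ε * q θ ≤ ε * Cq := by
        have := (abs_le.mp (hqbd θ)).2
        exact mul_le_mul_of_nonneg_left this hε0.le
      have hmul3 : -(ε * |s|) ≤ ε * s := by
        have := mul_le_mul_of_nonneg_left hslow hε0.le
        rw [mul_neg] at this
        exact this
      rw [mul_add, mul_add, mul_add, mul_one] at hiii
      rw [mul_neg] at hgc
      have h4 : ε * (δ/4) = δ/4 * ε := by ring
      linarith

lemma pd_neg (u : E2 → ℝ) (i : Fin 2) (x : E2) : pd (fun y => -u y) i x = -pd u i x := by
  simp [pd, fderiv_neg]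

lemma pd2_neg (u : E2 → ℝ) (i j : Fin 2) (x : E2) :
    pd2 (fun y => -u y) i j x = -pd2 u i j x := by
  unfold pd2
  have h1 : pd (fun y => -u y) j = fun y => -pd u j y := funext fun y => pd_neg u j y
  rw [h1]
  exact pd_neg (pd u j) i x

lemma Qf2_neg (u : E2 → ℝ) (x : E2) (a b : ℝ) :
    Qf2 (fun y => -u y) x a b = -Qf2 u x a b := by
  simp only [Qf2, pd2_neg]; ring

lemma IsCircleMedian.neg {u : E2 → ℝ} {x : E2} {ε m : ℝ} (h : IsCircleMedian u x ε m) :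
    IsCircleMedian (fun y => -u y) x ε (-m) := by
  unfold IsCircleMedian at h ⊢
  have e1 : {θ ∈ Set.Ico (0:ℝ) (2*π) | -m ≤ -u (circlePt x ε θ)}
      = {θ ∈ Set.Ico (0:ℝ) (2*π) | u (circlePt x ε θ) ≤ m} := by
    ext θ
    simp only [Set.mem_setOf_eq]
    exact and_congr_right fun _ => neg_le_neg_iff
  have e2 : {θ ∈ Set.Ico (0:ℝ) (2*π) | -u (circlePt x ε θ) ≤ -m}
      = {θ ∈ Set.Ico (0:ℝ) (2*π) | m ≤ u (circlePt x ε θ)} := by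
    ext θ
    simp only [Set.mem_setOf_eq]
    exact and_congr_right fun _ => neg_le_neg_iff
  rw [e1, e2]
  exact h.symm

lemma med_measure_ge {u : E2 → ℝ} {x : E2} {ε m0 : ℝ} (h : IsCircleMedian u x ε m0) :
    ENNReal.ofReal π ≤ volume {θ ∈ Set.Ico (0:ℝ) (2*π) | m0 ≤ u (circlePt x ε θ)} := by
  have hπ : (0:ℝ) < π := Real.pi_pos
  set A := {θ ∈ Set.Ico (0:ℝ) (2*π) | m0 ≤ u (circlePt x ε θ)} with hA
  set B := {θ ∈ Set.Ico (0:ℝ) (2*π) | u (circlePt x ε θ) ≤ m0} with hB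
  have hcover : Set.Ico (0:ℝ) (2*π) ⊆ A ∪ B := by
    intro θ hθ
    rcases le_total m0 (u (circlePt x ε θ)) with h' | h'
    · exact Or.inl ⟨hθ, h'⟩
    · exact Or.inr ⟨hθ, h'⟩
  have h2 : ENNReal.ofReal (2*π) ≤ 2 * volume A := by
    calc ENNReal.ofReal (2*π) = volume (Set.Ico (0:ℝ) (2*π)) := by
          rw [Real.volume_Ico, sub_zero]
    _ ≤ volume (A ∪ B) := measure_mono hcover
    _ ≤ volume A + volume B := measure_union_le _ _
    _ = volume A + volume A := by rw [← h]
    _ = 2 * volume A := by rw [two_mul]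
  have h3 : ENNReal.ofReal (2*π) = 2 * ENNReal.ofReal π := by
    rw [show (2:ℝ)*π = 2*π from rfl, ENNReal.ofReal_mul (by norm_num : (0:ℝ) ≤ 2)]
    norm_num
  rw [h3] at h2
  exact (ENNReal.mul_le_mul_iff_right (by norm_num) (by norm_num)).mp h2

theorem med_lt {Ω : Set E2} (hΩ : IsOpen Ω) {u : E2 → ℝ} (hu : ContDiffOn ℝ 2 u Ω)
    {x : E2} (hx : x ∈ Ω) {g α : ℝ} (hgpos : 0 < g)
    (hg0 : pd u 0 x = g * Real.cos α) (hg1 : pd u 1 x = g * Real.sin α)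
    {m : ℝ → ℝ} (hm : ∀ᶠ ε in 𝓝[>] (0:ℝ), IsCircleMedian u x ε (m ε))
    {s : ℝ} (hs : Qf2 u x (-Real.sin α) (Real.cos α) / 2 < s) :
    ∀ᶠ ε in 𝓝[>] (0:ℝ), m ε < u x + ε^2*s := by
  filter_upwards [hm, med_upper hΩ hu hx hgpos hg0 hg1 hs] with ε hmed hvol
  by_contra hcon
  push_neg at hcon
  have hsub : {θ ∈ Set.Ico (0:ℝ) (2*π) | m ε ≤ u (circlePt x ε θ)}
      ⊆ {θ : ℝ | θ ∈ Set.Ico (0:ℝ) (2*π) ∧ u x + ε^2*s ≤ u (circlePt x ε θ)} := by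
    rintro θ ⟨hθ1, hθ2⟩
    exact ⟨hθ1, le_trans hcon hθ2⟩
  have := le_trans (med_measure_ge hmed) (measure_mono hsub)
  exact absurd (lt_of_le_of_lt this hvol) (lt_irrefl _)

theorem median_asymp {Ω : Set E2} (hΩ : IsOpen Ω) {u : E2 → ℝ} (hu : ContDiffOn ℝ 2 u Ω)
    {x : E2} (hx : x ∈ Ω) {g α : ℝ} (hgpos : 0 < g)
    (hg0 : pd u 0 x = g * Real.cos α) (hg1 : pd u 1 x = g * Real.sin α)
    {m : ℝ → ℝ} (hm : ∀ᶠ ε in 𝓝[>] (0:ℝ), IsCircleMedian u x ε (m ε)) :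
    (fun ε => m ε - u x - ε^2 * (Qf2 u x (-Real.sin α) (Real.cos α) / 2))
      =o[𝓝[>] (0:ℝ)] fun ε => ε^2 := by
  set qτ := Qf2 u x (-Real.sin α) (Real.cos α) / 2 with hqτ
  -- negated data
  have hu' : ContDiffOn ℝ 2 (fun y => -u y) Ω := hu.neg
  have hg0' : pd (fun y => -u y) 0 x = g * Real.cos (α + π) := by
    rw [pd_neg, hg0, Real.cos_add_pi]; ring
  have hg1' : pd (fun y => -u y) 1 x = g * Real.sin (α + π) := by
    rw [pd_neg, hg1, Real.sin_add_pi]; ring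
  have hm' : ∀ᶠ ε in 𝓝[>] (0:ℝ), IsCircleMedian (fun y => -u y) x ε (-(m ε)) :=
    hm.mono fun ε h => h.neg
  have hqτ' : Qf2 (fun y => -u y) x (-Real.sin (α+π)) (Real.cos (α+π)) / 2 = -qτ := by
    rw [Real.sin_add_pi, Real.cos_add_pi, neg_neg]
    rw [show Qf2 (fun y => -u y) x (Real.sin α) (-Real.cos α)
      = -Qf2 u x (Real.sin α) (-Real.cos α) from Qf2_neg u x _ _]
    rw [hqτ]
    have : Qf2 u x (Real.sin α) (-Real.cos α) = Qf2 u x (-Real.sin α) (Real.cos α) := by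
      simp only [Qf2]; ring
    rw [this]
    ring
  rw [isLittleO_iff]
  intro c hc
  have hup := med_lt hΩ hu hx hgpos hg0 hg1 hm (s := qτ + c) (by linarith)
  have hlow' := med_lt hΩ hu' hx hgpos hg0' hg1' hm' (s := -qτ + c) (by rw [hqτ']; linarith)
  filter_upwards [hup, hlow', self_mem_nhdsWithin] with ε h1 h2 hε
  have hε0 : 0 < ε := hε
  have h2' : u x - ε^2*(-qτ + c) < m ε := by
    have : -(m ε) < -(u x) + ε^2*(-qτ + c) := h2
    linarith
  rw [Real.norm_eq_abs, Real.norm_eq_abs, abs_of_nonneg (sq_nonneg ε), abs_le]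
  constructor
  · nlinarith [h2']
  · nlinarith [h1]

theorem pLap_eq {Ω : Set E2} (hΩ : IsOpen Ω) {u : E2 → ℝ} (hu : ContDiffOn ℝ 2 u Ω)
    {x : E2} (hx : x ∈ Ω) {g α : ℝ} (hgpos : 0 < g)
    (hg0 : pd u 0 x = g * Real.cos α) (hg1 : pd u 1 x = g * Real.sin α) (p : ℝ) :
    pLap p u x = g ^ (p-2) * ((pd2 u 0 0 x + pd2 u 1 1 x)
      + (p-2) * Qf2 u x (Real.cos α) (Real.sin α)) := by
  have hsc : Real.sin α^2 + Real.cos α^2 = 1 := Real.sin_sq_add_cos_sq α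
  have hgne : g ≠ 0 := ne_of_gt hgpos
  set Hm := fderiv ℝ (fderiv ℝ u) x with hHm
  have hFd : HasFDerivAt (fderiv ℝ u) Hm x := hasFDerivAt_fderiv hΩ hu hx
  have hpd : ∀ j : Fin 2, HasFDerivAt (fun y => pd u j y)
      ((ContinuousLinearMap.apply ℝ ℝ (EuclideanSpace.single j (1:ℝ))).comp Hm) x := fun j =>
    (ContinuousLinearMap.apply ℝ ℝ (EuclideanSpace.single j (1:ℝ))).hasFDerivAt.comp x hFd
  have hDval : ∀ i j : Fin 2,
      ((ContinuousLinearMap.apply ℝ ℝ (EuclideanSpace.single j (1:ℝ))).comp Hm)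
        (EuclideanSpace.single i 1) = pd2 u i j x := by
    intro i j
    rw [pd2_eq_Hm hΩ hu hx i j]
    rfl
  -- sum of squares
  have hS : HasFDerivAt (fun y => pd u 0 y^2 + pd u 1 y^2)
      ((pd u 0 x • ((ContinuousLinearMap.apply ℝ ℝ (EuclideanSpace.single (0:Fin 2) (1:ℝ))).comp Hm)
        + pd u 0 x • ((ContinuousLinearMap.apply ℝ ℝ (EuclideanSpace.single (0:Fin 2) (1:ℝ))).comp Hm))
       + (pd u 1 x • ((ContinuousLinearMap.apply ℝ ℝ (EuclideanSpace.single (1:Fin 2) (1:ℝ))).comp Hm)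
        + pd u 1 x • ((ContinuousLinearMap.apply ℝ ℝ (EuclideanSpace.single (1:Fin 2) (1:ℝ))).comp Hm))) x := by
    have h := ((hpd 0).mul (hpd 0)).add ((hpd 1).mul (hpd 1))
    have hfun : (fun y => pd u 0 y * pd u 0 y + pd u 1 y * pd u 1 y)
        = (fun y => pd u 0 y^2 + pd u 1 y^2) := by funext y; ring
    rw [← hfun]
    exact h
  have hSx : pd u 0 x^2 + pd u 1 x^2 = g^2 := by
    rw [hg0, hg1]; linear_combination g^2 * hsc
  have hSne : pd u 0 x^2 + pd u 1 x^2 ≠ 0 := by rw [hSx]; positivity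
  have hsqrtSx : Real.sqrt (pd u 0 x^2 + pd u 1 x^2) = g := by
    rw [hSx, Real.sqrt_sq hgpos.le]
  -- gradNorm as sqrt of binary sum
  have hgnf : (fun y => gradNorm u y) = fun y => Real.sqrt (pd u 0 y^2 + pd u 1 y^2) := by
    funext y
    rw [gradNorm, Fin.sum_univ_two]
  have hG : HasFDerivAt (fun y => gradNorm u y)
      ((1/(2*g)) • ((pd u 0 x • ((ContinuousLinearMap.apply ℝ ℝ (EuclideanSpace.single (0:Fin 2) (1:ℝ))).comp Hm)
        + pd u 0 x • ((ContinuousLinearMap.apply ℝ ℝ (EuclideanSpace.single (0:Fin 2) (1:ℝ))).comp Hm))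
       + (pd u 1 x • ((ContinuousLinearMap.apply ℝ ℝ (EuclideanSpace.single (1:Fin 2) (1:ℝ))).comp Hm)
        + pd u 1 x • ((ContinuousLinearMap.apply ℝ ℝ (EuclideanSpace.single (1:Fin 2) (1:ℝ))).comp Hm)))) x := by
    rw [hgnf]
    have h := (Real.hasDerivAt_sqrt hSne).comp_hasFDerivAt x hS
    rw [hsqrtSx] at h
    exact h
  have hGx : gradNorm u x = g := by
    rw [gradNorm, Fin.sum_univ_two, hsqrtSx]
  -- rpow of gradNorm
  have hrpow : HasDerivAt (fun t : ℝ => t ^ (p-2)) ((p-2) * g ^ (p-3)) g := by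
    have h := Real.hasDerivAt_rpow_const (x := g) (p := p-2) (Or.inl hgne)
    have hexp : p - 2 - 1 = p - 3 := by ring
    rwa [hexp] at h
  have hGp : HasFDerivAt (fun y => gradNorm u y ^ (p-2))
      (((p-2) * g ^ (p-3)) • ((1/(2*g)) • ((pd u 0 x • ((ContinuousLinearMap.apply ℝ ℝ (EuclideanSpace.single (0:Fin 2) (1:ℝ))).comp Hm)
        + pd u 0 x • ((ContinuousLinearMap.apply ℝ ℝ (EuclideanSpace.single (0:Fin 2) (1:ℝ))).comp Hm))
       + (pd u 1 x • ((ContinuousLinearMap.apply ℝ ℝ (EuclideanSpace.single (1:Fin 2) (1:ℝ))).comp Hm)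
        + pd u 1 x • ((ContinuousLinearMap.apply ℝ ℝ (EuclideanSpace.single (1:Fin 2) (1:ℝ))).comp Hm))))) x := by
    have hrpow' := hrpow
    rw [← hGx] at hrpow'
    have h := hrpow'.comp_hasFDerivAt x hG
    rw [hGx] at h
    exact h
  -- product rule for each coordinate
  have hterm : ∀ i : Fin 2, pd (fun y => gradNorm u y ^ (p-2) * pd u i y) i x
      = g^(p-2) * pd2 u i i x
        + pd u i x * ((p-2) * g^(p-3) * ((pd u 0 x * pd2 u i 0 x + pd u 1 x * pd2 u i 1 x) / g)) := by
    intro i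
    have hmul := hGp.mul (hpd i)
    have hfd := hmul.fderiv
    rw [pd, show (fun y => gradNorm u y ^ (p-2) * pd u i y)
      = ((fun y => gradNorm u y ^ (p-2)) * fun y => pd u i y) from rfl, hfd]
    simp only [ContinuousLinearMap.add_apply, ContinuousLinearMap.coe_smul', Pi.smul_apply,
      smul_eq_mul, hDval, hGx]
    ring
  have hg3 : g^(p-3) * g = g^(p-2) := by
    nth_rewrite 2 [show g = g^(1:ℝ) from (Real.rpow_one g).symm]
    rw [← Real.rpow_add hgpos]
    rw [show p - 3 + 1 = p - 2 from by ring]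
  rw [pLap, Fin.sum_univ_two, hterm 0, hterm 1]
  rw [hg0, hg1]
  have hq0 : (g*Real.cos α*pd2 u 0 0 x + g*Real.sin α*pd2 u 0 1 x)/g
      = Real.cos α*pd2 u 0 0 x + Real.sin α*pd2 u 0 1 x := by field_simp
  have hq1 : (g*Real.cos α*pd2 u 1 0 x + g*Real.sin α*pd2 u 1 1 x)/g
      = Real.cos α*pd2 u 1 0 x + Real.sin α*pd2 u 1 1 x := by field_simp
  rw [hq0, hq1]
  simp only [Qf2]
  linear_combination ((p-2) * (Real.cos α^2 * pd2 u 0 0 x + Real.cos α*Real.sin α*(pd2 u 0 1 x + pd2 u 1 0 x) + Real.sin α^2*pd2 u 1 1 x)) * hg3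

lemma const_sq_littleO {C : ℝ}
    (h : (fun ε : ℝ => C * ε^2) =o[𝓝[>] (0:ℝ)] fun ε => ε^2) : C = 0 := by
  by_contra hC
  have hpos : 0 < |C|/2 := by positivity
  have hev := (isLittleO_iff.mp h hpos).and self_mem_nhdsWithin
  obtain ⟨ε, hb, hε⟩ := hev.exists
  have hε0 : 0 < ε := hε
  rw [Real.norm_eq_abs, Real.norm_eq_abs, abs_mul, abs_of_nonneg (sq_nonneg ε)] at hb
  nlinarith [abs_pos.mpr hC, sq_nonneg ε, pow_pos hε0 2, hb]

end MedAux

/-- median/max-min asymptotic characterization of Δ_p u(x) = 0. -/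
theorem pLap_zero_iff_median_maxmin (Ω : Set (EuclideanSpace ℝ (Fin 2))) (hΩ : IsOpen Ω)
    (u : EuclideanSpace ℝ (Fin 2) → ℝ) (hu : ContDiffOn ℝ 2 u Ω)
    (x : EuclideanSpace ℝ (Fin 2)) (hx : x ∈ Ω) (hD : fderiv ℝ u x ≠ 0)
    (p : ℝ) (hp : 1 < p) (m : ℝ → ℝ)
    (hm : ∀ᶠ ε in 𝓝[>] (0:ℝ), IsCircleMedian u x ε (m ε)) :
    pLap p u x = 0 ↔
      (fun ε : ℝ => u x - ((1 / p) * m ε + ((p - 1) / (2 * p)) *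
          (sSup (u '' Metric.closedBall x ε) + sInf (u '' Metric.closedBall x ε))))
        =o[𝓝[>] (0:ℝ)] fun ε => ε ^ 2 := by
  have hp0 : (0:ℝ) < p := by linarith
  have hpne : p ≠ 0 := ne_of_gt hp0
  -- gradient is nonzero in coordinates
  have hsq : 0 < pd u 0 x^2 + pd u 1 x^2 := by
    rcases lt_or_eq_of_le (by positivity : (0:ℝ) ≤ pd u 0 x^2 + pd u 1 x^2) with h | h
    · exact h
    · exfalso
      apply hD
      have h0 : pd u 0 x = 0 := by nlinarith [sq_nonneg (pd u 0 x), sq_nonneg (pd u 1 x)]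
      have h1 : pd u 1 x = 0 := by nlinarith [sq_nonneg (pd u 0 x), sq_nonneg (pd u 1 x)]
      ext v
      have hv := eq_vec2 v
      rw [hv, clm_vec2]
      show v 0 * pd u 0 x + v 1 * pd u 1 x = 0
      rw [h0, h1]; ring
  -- polar decomposition of the gradient
  set z : ℂ := ⟨pd u 0 x, pd u 1 x⟩ with hz
  have hzne : z ≠ 0 := by
    intro h
    rw [Complex.ext_iff] at h
    simp only [Complex.zero_re, Complex.zero_im] at h
    nlinarith [h.1, h.2, hsq]
  set g := ‖z‖ with hg
  have hgpos : 0 < g := by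
    rw [hg]; exact norm_pos_iff.mpr hzne
  set α := Complex.arg z with hα
  have hg0 : pd u 0 x = g * Real.cos α := (Complex.norm_mul_cos_arg z).symm
  have hg1 : pd u 1 x = g * Real.sin α := (Complex.norm_mul_sin_arg z).symm
  have hsc : Real.sin α^2 + Real.cos α^2 = 1 := Real.sin_sq_add_cos_sq α
  -- the constants
  set A := Qf2 u x (Real.cos α) (Real.sin α) with hA
  set Bt := Qf2 u x (-Real.sin α) (Real.cos α) with hBt
  set C₀ := Bt/(2*p) + ((p-1)/(2*p))*A with hC₀
  -- max asymptotics
  have hmax := sSup_asymp hΩ hu hx hgpos hg0 hg1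
  -- min asymptotics via -u
  have hu' : ContDiffOn ℝ 2 (fun y => -u y) Ω := hu.neg
  have hg0' : pd (fun y => -u y) 0 x = g * Real.cos (α + π) := by
    rw [pd_neg, hg0, Real.cos_add_pi]; ring
  have hg1' : pd (fun y => -u y) 1 x = g * Real.sin (α + π) := by
    rw [pd_neg, hg1, Real.sin_add_pi]; ring
  have hminraw := sSup_asymp hΩ hu' hx hgpos hg0' hg1'
  have hQneg : Qf2 (fun y => -u y) x (Real.cos (α+π)) (Real.sin (α+π)) = -A := by
    rw [Real.cos_add_pi, Real.sin_add_pi, Qf2_neg, hA]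
    have : Qf2 u x (-Real.cos α) (-Real.sin α) = Qf2 u x (Real.cos α) (Real.sin α) := by
      simp only [Qf2]; ring
    rw [this]
  have hsup_neg : ∀ ε : ℝ, sSup ((fun y => -u y) '' Metric.closedBall x ε)
      = -sInf (u '' Metric.closedBall x ε) := by
    intro ε
    have h1 : (fun y => -u y) '' Metric.closedBall x ε = -(u '' Metric.closedBall x ε) := by
      rw [← Set.image_neg_eq_neg, ← Set.image_comp]
      rfl
    rw [h1, Real.sInf_def, neg_neg]
  have hmin : (fun ε : ℝ => -sInf (u '' Metric.closedBall x ε)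
      - (-u x + ε * g - ε^2/2 * A)) =o[𝓝[>] (0:ℝ)] fun ε => ε^2 := by
    have heq : (fun ε : ℝ => sSup ((fun y => -u y) '' Metric.closedBall x ε)
        - ((fun y => -u y) x + ε * g + ε^2/2 * Qf2 (fun y => -u y) x (Real.cos (α+π)) (Real.sin (α+π))))
        = fun ε : ℝ => -sInf (u '' Metric.closedBall x ε) - (-u x + ε * g - ε^2/2 * A) := by
      funext ε
      rw [hsup_neg, hQneg]
      ring
    rw [← heq]
    exact hminraw
  -- sum of max and min
  have hP : (fun ε : ℝ => (sSup (u '' Metric.closedBall x ε) + sInf (u '' Metric.closedBall x ε))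
      - (2*u x + ε^2 * A)) =o[𝓝[>] (0:ℝ)] fun ε => ε^2 := by
    have h := hmax.sub hmin
    have heq : (fun ε : ℝ => (sSup (u '' Metric.closedBall x ε)
          - (u x + ε * g + ε^2/2 * Qf2 u x (Real.cos α) (Real.sin α)))
        - (-sInf (u '' Metric.closedBall x ε) - (-u x + ε * g - ε^2/2 * A)))
        = fun ε : ℝ => (sSup (u '' Metric.closedBall x ε) + sInf (u '' Metric.closedBall x ε))
          - (2*u x + ε^2 * A) := by
      funext ε
      rw [← hA]
      ring
    rw [heq] at h
    exact h
  -- median asymptotics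
  have hmed := median_asymp hΩ hu hx hgpos hg0 hg1 hm
  rw [show Qf2 u x (-Real.sin α) (Real.cos α) = Bt from rfl] at hmed
  -- combination
  have hW : (fun ε : ℝ => (-(1/p)) * (m ε - u x - ε^2 * (Bt/2))
      + (-((p-1)/(2*p))) * ((sSup (u '' Metric.closedBall x ε) + sInf (u '' Metric.closedBall x ε))
        - (2*u x + ε^2 * A))) =o[𝓝[>] (0:ℝ)] fun ε => ε^2 :=
    (hmed.const_mul_left _).add (hP.const_mul_left _)
  have htarW : ∀ ε : ℝ, (u x - ((1 / p) * m ε + ((p - 1) / (2 * p)) *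
      (sSup (u '' Metric.closedBall x ε) + sInf (u '' Metric.closedBall x ε)))) + C₀ * ε^2
      = (-(1/p)) * (m ε - u x - ε^2 * (Bt/2))
      + (-((p-1)/(2*p))) * ((sSup (u '' Metric.closedBall x ε) + sInf (u '' Metric.closedBall x ε))
        - (2*u x + ε^2 * A)) := by
    intro ε
    rw [hC₀]
    field_simp
    ring
  -- pLap in terms of C₀
  have hBtA : Bt + A = pd2 u 0 0 x + pd2 u 1 1 x := by
    rw [hBt, hA]
    simp only [Qf2]
    linear_combination (pd2 u 0 0 x + pd2 u 1 1 x) * hsc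
  have hlink : pLap p u x = g^(p-2) * (2*p*C₀) := by
    have h2 : (Bt + A) + (p-2)*A = 2*p*(Bt/(2*p) + ((p-1)/(2*p))*A) := by
      field_simp
      ring
    rw [pLap_eq hΩ hu hx hgpos hg0 hg1 p, ← hA, ← hBtA, h2, ← hC₀]
  have hgp : (0:ℝ) < g^(p-2) := Real.rpow_pos_of_pos hgpos _
  have hiffC : pLap p u x = 0 ↔ C₀ = 0 := by
    rw [hlink]
    constructor
    · intro h
      rcases mul_eq_zero.mp h with h' | h'
      · exact absurd h' (ne_of_gt hgp)
      · rcases mul_eq_zero.mp h' with h'' | h''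
        · exact absurd h'' (by positivity)
        · exact h''
    · intro h; rw [h]; ring
  rw [hiffC]
  constructor
  · intro hC0
    have heq : (fun ε : ℝ => u x - ((1 / p) * m ε + ((p - 1) / (2 * p)) *
        (sSup (u '' Metric.closedBall x ε) + sInf (u '' Metric.closedBall x ε))))
        = fun ε : ℝ => (-(1/p)) * (m ε - u x - ε^2 * (Bt/2))
        + (-((p-1)/(2*p))) * ((sSup (u '' Metric.closedBall x ε) + sInf (u '' Metric.closedBall x ε))
          - (2*u x + ε^2 * A)) := by
      funext ε
      have := htarW ε
      rw [hC0] at this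
      linarith [this]
    calc (fun ε : ℝ => u x - ((1 / p) * m ε + ((p - 1) / (2 * p)) *
        (sSup (u '' Metric.closedBall x ε) + sInf (u '' Metric.closedBall x ε)))) = _ := heq
    _ =o[𝓝[>] (0:ℝ)] (fun ε => ε^2) := hW
  · intro htar
    apply const_sq_littleO (C := C₀)
    have h := hW.sub htar
    have heq : (fun ε : ℝ => ((-(1/p)) * (m ε - u x - ε^2 * (Bt/2))
        + (-((p-1)/(2*p))) * ((sSup (u '' Metric.closedBall x ε) + sInf (u '' Metric.closedBall x ε))
          - (2*u x + ε^2 * A)))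
        - (u x - ((1 / p) * m ε + ((p - 1) / (2 * p)) *
          (sSup (u '' Metric.closedBall x ε) + sInf (u '' Metric.closedBall x ε)))))
        = fun ε : ℝ => C₀ * ε^2 := by
      funext ε
      have := htarW ε
      linarith [this]
    rw [heq] at h
    exact h
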